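/- Let f : (0,∞) → ℝ be smooth and let z : ℝ → ℂ be differentiable with z(t) ≠ 0 for all t ∈ ℝ and z′(t) = i·z(t)·f(|z(t)|) − i. Fix θ ∈ ℝ and define c : ℝ → ℂ by c(t) = |z(0)|·exp(i·θ + i·∫_0^t du/conj(z(u))). Then for all t ∈ ℝ: |c′(t)| = 1, c″(t) = i·f(|c(t)|)·c′(t), and −i·conj(c(t))·c′(t) = z(t). -/

import Mathlib

open Set Filter Topology MeasureTheory intervalIntegral

/-- From a nonvanishing global solution of `z′ = i·z·f(|z|) − i` one reconstructs a
unit-speed curve `c(t) = |z(0)|·exp(iθ + i∫₀ᵗ du/conj z(u))` with curvature `f(|c|)`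
and `−i·conj(c)·c′ = z`. -/
theorem stmt2 (f : ℝ → ℝ)
    (hf : ContDiffOn ℝ (⊤ : ℕ∞) f (Set.Ioi 0))
    (z : ℝ → ℂ) (hz0 : ∀ t, z t ≠ 0)
    (hz : ∀ t, HasDerivAt z
      (Complex.I * z t * (f (‖z t‖) : ℂ) - Complex.I) t)
    (θ : ℝ) (c : ℝ → ℂ)
    (hc : ∀ t, c t = (‖z 0‖ : ℂ) *
      Complex.exp (Complex.I * (θ : ℂ)
        + Complex.I * ∫ u in (0:ℝ)..t, ((starRingEnd ℂ) (z u))⁻¹)) :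
    ∀ t, ‖deriv c t‖ = 1 ∧
      deriv (deriv c) t = Complex.I * (f (‖c t‖) : ℂ) * deriv c t ∧
      -Complex.I * (starRingEnd ℂ) (c t) * deriv c t = z t := by
  have hzd : Differentiable ℝ z := fun t => (hz t).differentiableAt
  have hzc : Continuous z := hzd.continuous
  have hcz : ∀ t, (starRingEnd ℂ) (z t) ≠ 0 := fun t => by simpa using hz0 t
  have hgc : Continuous (fun u => ((starRingEnd ℂ) (z u))⁻¹) :=
    (Complex.continuous_conj.comp hzc).inv₀ hcz
  -- derivative of conj ∘ z
  have hconjz : ∀ t, HasDerivAt (fun t => (starRingEnd ℂ) (z t))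
      ((starRingEnd ℂ) (Complex.I * z t * (f (‖z t‖) : ℂ) - Complex.I)) t := by
    intro t
    have := Complex.conjCLE.toContinuousLinearMap.hasFDerivAt.comp_hasDerivAt t (hz t)
    simp at this ⊢; exact this
  -- derivative of g
  have hg' : ∀ t, HasDerivAt (fun u => ((starRingEnd ℂ) (z u))⁻¹)
      (-((starRingEnd ℂ) (Complex.I * z t * (f (‖z t‖) : ℂ) - Complex.I))
        / ((starRingEnd ℂ) (z t)) ^ 2) t := by
    intro t
    have h := (hasDerivAt_inv (hcz t)).comp t (hconjz t)
    refine h.congr_deriv ?_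
    ring
  -- derivative of the integral
  have hF : ∀ t, HasDerivAt (fun t => ∫ u in (0:ℝ)..t, ((starRingEnd ℂ) (z u))⁻¹) (((starRingEnd ℂ) (z t))⁻¹) t := fun t =>
    intervalIntegral.integral_hasDerivAt_right (hgc.intervalIntegrable _ _)
      (hgc.stronglyMeasurableAtFilter _ _) hgc.continuousAt
  -- derivative of c
  have hc' : ∀ t, HasDerivAt c (c t * (Complex.I * ((starRingEnd ℂ) (z t))⁻¹)) t := by
    intro t
    have h1 : HasDerivAt (fun t => Complex.I * (θ : ℂ) + Complex.I * ∫ u in (0:ℝ)..t, ((starRingEnd ℂ) (z u))⁻¹)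
        (Complex.I * ((starRingEnd ℂ) (z t))⁻¹) t := ((hF t).const_mul Complex.I).const_add _
    have h2 := h1.cexp.const_mul ((‖z 0‖ : ℂ))
    have hfun : (fun t => (‖z 0‖ : ℂ) * Complex.exp (Complex.I * (θ : ℂ)
        + Complex.I * ∫ u in (0:ℝ)..t, ((starRingEnd ℂ) (z u))⁻¹)) = c := funext fun t => (hc t).symm
    rw [hfun] at h2
    refine h2.congr_deriv ?_
    rw [hc t]; ring
  have hderiv : ∀ t, deriv c t = c t * (Complex.I * ((starRingEnd ℂ) (z t))⁻¹) := fun t => (hc' t).deriv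
  have hconjc : ∀ t, HasDerivAt (fun t => (starRingEnd ℂ) (c t))
      ((starRingEnd ℂ) (c t * (Complex.I * ((starRingEnd ℂ) (z t))⁻¹))) t := by
    intro t
    have := Complex.conjCLE.toContinuousLinearMap.hasFDerivAt.comp_hasDerivAt t (hc' t)
    simp at this ⊢; exact this
  -- the key conserved quantity Q = c·conj c / (z·conj z)
  set Q : ℝ → ℂ := fun t => c t * (starRingEnd ℂ) (c t) * (z t * (starRingEnd ℂ) (z t))⁻¹
    with hQdef
  have hzz : ∀ t, z t * (starRingEnd ℂ) (z t) ≠ 0 := fun t => mul_ne_zero (hz0 t) (hcz t)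
  have hQ' : ∀ t, HasDerivAt Q 0 t := by
    intro t
    have hnum : HasDerivAt (fun t => c t * (starRingEnd ℂ) (c t))
        (c t * (Complex.I * ((starRingEnd ℂ) (z t))⁻¹) * (starRingEnd ℂ) (c t)
          + c t * (starRingEnd ℂ) (c t * (Complex.I * ((starRingEnd ℂ) (z t))⁻¹))) t := (hc' t).mul (hconjc t)
    have hden : HasDerivAt (fun t => z t * (starRingEnd ℂ) (z t))
        ((Complex.I * z t * (f (‖z t‖) : ℂ) - Complex.I) * (starRingEnd ℂ) (z t)
          + z t * (starRingEnd ℂ) (Complex.I * z t * (f (‖z t‖) : ℂ) - Complex.I)) t :=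
      (hz t).mul (hconjz t)
    have hinv' := (hasDerivAt_inv (hzz t)).comp t hden
    have hinv : HasDerivAt (fun t => (z t * (starRingEnd ℂ) (z t))⁻¹)
        (-((Complex.I * z t * (f (‖z t‖) : ℂ) - Complex.I) * (starRingEnd ℂ) (z t)
            + z t * (starRingEnd ℂ) (Complex.I * z t * (f (‖z t‖) : ℂ) - Complex.I))
          / (z t * (starRingEnd ℂ) (z t)) ^ 2) t := by
      refine hinv'.congr_deriv ?_
      ring
    have := hnum.mul hinv
    refine this.congr_deriv ?_; symm
    simp only [map_mul, map_sub, Complex.conj_conj, Complex.conj_I, map_inv₀,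
      Complex.conj_ofReal]
    field_simp [hz0 t, hcz t]
    ring
  have hQconst : ∀ t, Q t = Q 0 := by
    have hdiff : Differentiable ℝ Q := fun t => (hQ' t).differentiableAt
    intro t
    exact is_const_of_deriv_eq_zero hdiff (fun t => (hQ' t).deriv) t 0
  have hQ0 : Q 0 = 1 := by
    have hc0 : c 0 = (‖z 0‖ : ℂ) * Complex.exp (Complex.I * (θ : ℂ)) := by
      rw [hc 0]; simp
    have he : Complex.exp (Complex.I * (θ : ℂ))
        * (starRingEnd ℂ) (Complex.exp (Complex.I * (θ : ℂ))) = 1 := by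
      rw [Complex.mul_conj]
      norm_cast
      rw [Complex.normSq_eq_norm_sq, Complex.norm_exp]
      simp
    have hzz0 : z 0 * (starRingEnd ℂ) (z 0)
        = (‖z 0‖ : ℂ) * (‖z 0‖ : ℂ) := by
      rw [Complex.mul_conj, Complex.normSq_eq_norm_sq]
      push_cast
      ring
    have hA : (‖z 0‖ : ℂ) ≠ 0 :=
      Complex.ofReal_ne_zero.mpr (norm_ne_zero_iff.mpr (hz0 0))
    rw [hQdef]
    simp only [hc0, hzz0, map_mul, Complex.conj_ofReal]
    rw [show (‖z 0‖ : ℂ) * Complex.exp (Complex.I * (θ : ℂ)) *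
        ((‖z 0‖ : ℂ) * (starRingEnd ℂ) (Complex.exp (Complex.I * (θ : ℂ)))) *
        ((‖z 0‖ : ℂ) * (‖z 0‖ : ℂ))⁻¹ =
      (‖z 0‖ : ℂ) * (‖z 0‖ : ℂ) *
        ((‖z 0‖ : ℂ) * (‖z 0‖ : ℂ))⁻¹ *
        (Complex.exp (Complex.I * (θ : ℂ)) *
          (starRingEnd ℂ) (Complex.exp (Complex.I * (θ : ℂ)))) from by ring]
    rw [mul_inv_cancel₀ (mul_ne_zero hA hA), one_mul, he]
  have key : ∀ t, c t * (starRingEnd ℂ) (c t) = z t * (starRingEnd ℂ) (z t) := by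
    intro t
    have h := (hQconst t).trans hQ0
    rw [hQdef] at h
    field_simp [hzz t] at h
    exact (div_eq_one_iff_eq (hzz t)).mp h
  have hnsq : ∀ t, Complex.normSq (c t) = Complex.normSq (z t) := by
    intro t
    have := key t
    rw [Complex.mul_conj, Complex.mul_conj] at this
    exact_mod_cast this
  have habs : ∀ t, ‖c t‖ = ‖z t‖ := fun t => by
    rw [Complex.norm_def, Complex.norm_def, hnsq t]
  have hderivfun : deriv c = fun t => c t * (Complex.I * ((starRingEnd ℂ) (z t))⁻¹) := funext hderiv
  intro t
  refine ⟨?_, ?_, ?_⟩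
  · rw [hderiv t]
    simp only [norm_mul, norm_inv, Complex.norm_conj, Complex.norm_I, habs t]
    rw [one_mul, mul_inv_cancel₀ (norm_ne_zero_iff.mpr (hz0 t))]
  · have hd2 : HasDerivAt (fun t => c t * (Complex.I * ((starRingEnd ℂ) (z t))⁻¹))
        (c t * (Complex.I * ((starRingEnd ℂ) (z t))⁻¹) * (Complex.I * ((starRingEnd ℂ) (z t))⁻¹)
          + c t * (Complex.I *
            (-((starRingEnd ℂ) (Complex.I * z t * (f (‖z t‖) : ℂ) - Complex.I))
              / ((starRingEnd ℂ) (z t)) ^ 2))) t :=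
      (hc' t).mul ((hg' t).const_mul Complex.I)
    rw [hderivfun, hd2.deriv, habs t]
    simp only [map_mul, map_sub, Complex.conj_conj, Complex.conj_I, Complex.conj_ofReal]
    field_simp [hcz t]
    ring
  · rw [hderiv t]
    have hk := key t
    have hI : Complex.I * Complex.I = -1 := Complex.I_mul_I
    calc -Complex.I * (starRingEnd ℂ) (c t) * (c t * (Complex.I * ((starRingEnd ℂ) (z t))⁻¹))
        = c t * (starRingEnd ℂ) (c t) * ((starRingEnd ℂ) (z t))⁻¹
            * (-(Complex.I * Complex.I)) := by ring
      _ = z t * (starRingEnd ℂ) (z t) * ((starRingEnd ℂ) (z t))⁻¹ := by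
          rw [hk, hI]; ring
      _ = z t := mul_inv_cancel_right₀ (hcz t) _
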